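/- Let K be a real Lie algebra and ∂ : K* → K a linear map that is symmetric and K-invariant. Then the bracket ⁅γ,γ'⁆_* := (∂γ)·γ' on K* is antisymmetric and satisfies the Jacobi identity, so it makes K* into a real Lie algebra; moreover ∂ : (K*, ⁅ , ⁆_*) → K is a Lie algebra homomorphism, and the coadjoint action of K on K* is by derivations of ⁅ , ⁆_*, i.e., k·⁅γ,γ'⁆_* = ⁅k·γ, γ'⁆_* + ⁅γ, k·γ'⁆_* for all k ∈ K, γ, γ' ∈ K*. -/
import Mathlib


open Module

/-- The coadjoint action of `k ∈ K` on `γ ∈ K*`: `(k·γ)(x) = -γ ⁅k, x⁆`. -/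
def coad {K : Type*} [LieRing K] [LieAlgebra ℝ K] (k : K) (γ : Dual ℝ K) :
    Dual ℝ K :=
  -(γ ∘ₗ (LieAlgebra.ad ℝ K k))

/-- The bracket `⁅γ,γ'⁆_* := (δγ)·γ'` on `K*`. -/
def starBracket {K : Type*} [LieRing K] [LieAlgebra ℝ K] (δ : Dual ℝ K →ₗ[ℝ] K)
    (γ γ' : Dual ℝ K) : Dual ℝ K :=
  coad (δ γ) γ'

lemma coad_apply {K : Type*} [LieRing K] [LieAlgebra ℝ K] (k : K) (γ : Dual ℝ K)
    (x : K) : coad k γ x = -γ ⁅k, x⁆ := rfl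

lemma delta_coad {K : Type*} [LieRing K] [LieAlgebra ℝ K]
    (δ : Dual ℝ K →ₗ[ℝ] K)
    (hsym : ∀ γ γ' : Dual ℝ K, γ' (δ γ) = γ (δ γ'))
    (hinv : ∀ (k : K) (γ γ' : Dual ℝ K), γ ⁅k, δ γ'⁆ + γ' ⁅k, δ γ⁆ = 0)
    (k : K) (γ : Dual ℝ K) : δ (coad k γ) = ⁅k, δ γ⁆ := by
  rw [← sub_eq_zero, ← Module.forall_dual_apply_eq_zero_iff ℝ]
  intro μ
  have h1 : μ (δ (coad k γ)) = (coad k γ) (δ μ) := hsym _ _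
  have h2 := hinv k γ μ
  simp only [map_sub, h1, coad_apply]
  linarith

theorem stmt7 {K : Type*} [LieRing K] [LieAlgebra ℝ K]
    (δ : Dual ℝ K →ₗ[ℝ] K)
    (hsym : ∀ γ γ' : Dual ℝ K, γ' (δ γ) = γ (δ γ'))
    (hinv : ∀ (k : K) (γ γ' : Dual ℝ K), γ ⁅k, δ γ'⁆ + γ' ⁅k, δ γ⁆ = 0) :
    -- antisymmetry
    (∀ γ γ' : Dual ℝ K, starBracket δ γ γ' = - starBracket δ γ' γ) ∧
    -- Jacobi identity
    (∀ γ γ' γ'' : Dual ℝ K,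
        starBracket δ γ (starBracket δ γ' γ'')
          = starBracket δ (starBracket δ γ γ') γ''
            + starBracket δ γ' (starBracket δ γ γ'')) ∧
    -- δ is a Lie algebra homomorphism
    (∀ γ γ' : Dual ℝ K, δ (starBracket δ γ γ') = ⁅δ γ, δ γ'⁆) ∧
    -- the coadjoint action acts by derivations of the star bracket
    (∀ (k : K) (γ γ' : Dual ℝ K),
        coad k (starBracket δ γ γ')
          = starBracket δ (coad k γ) γ' + starBracket δ γ (coad k γ')) := by
  have hdc := delta_coad δ hsym hinv
  have hhom : ∀ γ γ' : Dual ℝ K, δ (starBracket δ γ γ') = ⁅δ γ, δ γ'⁆ := by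
    intro γ γ'; exact hdc (δ γ) γ'
  refine ⟨?_, ?_, hhom, ?_⟩
  · intro γ γ'
    ext x
    have h2 := hinv x γ' γ
    simp only [starBracket, coad_apply, LinearMap.neg_apply]
    rw [show (⁅x, δ γ⁆ : K) = -⁅δ γ, x⁆ by rw [lie_skew],
        show (⁅x, δ γ'⁆ : K) = -⁅δ γ', x⁆ by rw [lie_skew]] at h2
    simp only [map_neg] at h2
    linarith
  · intro γ γ' γ''
    ext x
    simp only [starBracket, coad_apply, LinearMap.add_apply, hdc, map_neg, neg_neg]
    have : (⁅δ γ, ⁅δ γ', x⁆⁆ : K) = ⁅⁅δ γ, δ γ'⁆, x⁆ + ⁅δ γ', ⁅δ γ, x⁆⁆ :=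
      leibniz_lie _ _ _
    rw [show (⁅δ γ', ⁅δ γ, x⁆⁆ : K) = ⁅δ γ, ⁅δ γ', x⁆⁆ - ⁅⁅δ γ, δ γ'⁆, x⁆ by
      rw [this]; abel]
    simp [map_sub]
  · intro k γ γ'
    ext x
    simp only [starBracket, coad_apply, LinearMap.add_apply, hdc, map_neg, neg_neg]
    have : (⁅k, ⁅δ γ, x⁆⁆ : K) = ⁅⁅k, δ γ⁆, x⁆ + ⁅δ γ, ⁅k, x⁆⁆ := leibniz_lie _ _ _
    rw [show (⁅δ γ, ⁅k, x⁆⁆ : K) = ⁅k, ⁅δ γ, x⁆⁆ - ⁅⁅k, δ γ⁆, x⁆ by rw [this]; abel]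
    simp [map_sub]
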